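/- arXiv:1707.06769 — 5 statements merged into one kernel-verified Lean document; each statement's English description precedes it below -/
import Mathlib

section
/- For s ∈ (0,1), s ≠ 1/2, and an integer k ≥ 2, the double integral ∫_{-1}^{1} ∫_{-1}^{1} (1-|x|)(1-|y|)/|x-y-k|^{1+2s} dx dy equals (4(k+1)^{3-2s} + 4(k-1)^{3-2s} - 6k^{3-2s} - (k+2)^{3-2s} - (k-2)^{3-2s}) / (4s(1-2s)(1-s)(3-2s)). -/
open Real MeasureTheory

private lemma hderiv_rpow {c r x : ℝ} (hx : 0 < c + x) :
    HasDerivAt (fun t : ℝ => (c + t) ^ r) (r * (c + x) ^ (r - 1)) x := by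
  have h : HasDerivAt (fun t : ℝ => c + t) 1 x := (hasDerivAt_id x).const_add c
  have := h.rpow_const (p := r) (Or.inl (ne_of_gt hx))
  simpa using this

private lemma hderiv_rpow' {c r : ℝ} (x : ℝ) (hr : 1 ≤ r) :
    HasDerivAt (fun t : ℝ => (c + t) ^ r) (r * (c + x) ^ (r - 1)) x := by
  have h : HasDerivAt (fun t : ℝ => c + t) 1 x := (hasDerivAt_id x).const_add c
  have := h.rpow_const (p := r) (Or.inr hr)
  simpa using this

private lemma piece_pos (c r : ℝ) (hc : 0 < c) (h1 : r + 1 ≠ 0) (h2 : r + 2 ≠ 0) :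
    ∫ x in (0:ℝ)..1, (1 - x) * (c + x) ^ r
      = (c+1)^(r+2)/((r+1)*(r+2)) - c^(r+1)/(r+1) - c^(r+2)/((r+1)*(r+2)) := by
  have key : ∀ x ∈ Set.uIcc (0:ℝ) 1,
      HasDerivAt (fun t : ℝ => (1 - t) * (c + t) ^ (r+1) / (r+1)
        + (c + t) ^ (r+2) / ((r+1)*(r+2))) ((1 - x) * (c + x) ^ r) x := by
    intro x hx
    rw [Set.uIcc_of_le (by norm_num)] at hx
    have hcx : 0 < c + x := by nlinarith [hx.1]
    have d1 : HasDerivAt (fun t : ℝ => (1 - t)) (-1) x := by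
      simpa using (hasDerivAt_id x).const_sub 1
    have d2 := hderiv_rpow (r := r+1) hcx
    have d3 := hderiv_rpow (r := r+2) hcx
    rw [show r + 1 - 1 = r from by ring] at d2
    rw [show r + 2 - 1 = r + 1 from by ring] at d3
    have := ((d1.mul d2).div_const (r+1)).add (d3.div_const ((r+1)*(r+2)))
    refine this.congr_deriv ?_
    field_simp
    ring
  have hint : IntervalIntegrable (fun x : ℝ => (1 - x) * (c + x) ^ r) volume 0 1 := by
    apply ContinuousOn.intervalIntegrable
    apply ContinuousOn.mul (by fun_prop)
    apply ContinuousOn.rpow_const (by fun_prop)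
    intro x hx
    rw [Set.uIcc_of_le (by norm_num)] at hx
    exact Or.inl (by nlinarith [hx.1])
  rw [intervalIntegral.integral_eq_sub_of_hasDerivAt key hint]
  norm_num
  ring

private lemma piece_neg (c r : ℝ) (hc : 1 < c) (h1 : r + 1 ≠ 0) (h2 : r + 2 ≠ 0) :
    ∫ x in (-1:ℝ)..0, (1 + x) * (c + x) ^ r
      = c^(r+1)/(r+1) - c^(r+2)/((r+1)*(r+2)) + (c-1)^(r+2)/((r+1)*(r+2)) := by
  have key : ∀ x ∈ Set.uIcc (-1:ℝ) 0,
      HasDerivAt (fun t : ℝ => (1 + t) * (c + t) ^ (r+1) / (r+1)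
        - (c + t) ^ (r+2) / ((r+1)*(r+2))) ((1 + x) * (c + x) ^ r) x := by
    intro x hx
    rw [Set.uIcc_of_le (by norm_num)] at hx
    have hcx : 0 < c + x := by nlinarith [hx.1]
    have d1 : HasDerivAt (fun t : ℝ => (1 + t)) 1 x := by
      simpa using (hasDerivAt_id x).const_add 1
    have d2 := hderiv_rpow (r := r+1) hcx
    have d3 := hderiv_rpow (r := r+2) hcx
    rw [show r + 1 - 1 = r from by ring] at d2
    rw [show r + 2 - 1 = r + 1 from by ring] at d3
    have := ((d1.mul d2).div_const (r+1)).sub (d3.div_const ((r+1)*(r+2)))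
    refine this.congr_deriv ?_
    field_simp
    ring
  have hint : IntervalIntegrable (fun x : ℝ => (1 + x) * (c + x) ^ r) volume (-1) 0 := by
    apply ContinuousOn.intervalIntegrable
    apply ContinuousOn.mul (by fun_prop)
    apply ContinuousOn.rpow_const (by fun_prop)
    intro x hx
    rw [Set.uIcc_of_le (by norm_num)] at hx
    exact Or.inl (by nlinarith [hx.1])
  rw [intervalIntegral.integral_eq_sub_of_hasDerivAt key hint]
  norm_num
  ring

private lemma piece_neg_one (r : ℝ) (h1 : 0 < r + 1) (h2 : 1 ≤ r + 2) :
    ∫ x in (-1:ℝ)..0, (1 + x) * ((1:ℝ) + x) ^ r = 1 / (r+2) := by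
  have h2' : r + 2 ≠ 0 := by linarith
  have e : ∫ x in (-1:ℝ)..0, (1 + x) * ((1:ℝ) + x) ^ r
      = ∫ x in (-1:ℝ)..0, ((1:ℝ) + x) ^ (r+1) := by
    apply intervalIntegral.integral_congr
    intro x hx
    rw [Set.uIcc_of_le (by norm_num)] at hx
    have hb : (0:ℝ) ≤ 1 + x := by linarith [hx.1]
    dsimp only
    rw [show r + 1 = 1 + r from by ring, Real.rpow_add' hb (by linarith : (1:ℝ) + r ≠ 0), Real.rpow_one]
  rw [e]
  have key : ∀ x ∈ Set.uIcc (-1:ℝ) 0,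
      HasDerivAt (fun t : ℝ => ((1:ℝ) + t) ^ (r+2) / (r+2)) (((1:ℝ) + x) ^ (r+1)) x := by
    intro x hx
    have d := hderiv_rpow' (c := 1) (r := r+2) x h2
    rw [show r + 2 - 1 = r + 1 from by ring] at d
    have := d.div_const (r+2)
    refine this.congr_deriv ?_
    field_simp
  have hint : IntervalIntegrable (fun x : ℝ => ((1:ℝ) + x) ^ (r+1)) volume (-1) 0 := by
    apply ContinuousOn.intervalIntegrable
    apply ContinuousOn.rpow_const (by fun_prop)
    intro x hx
    exact Or.inr (by linarith)
  rw [intervalIntegral.integral_eq_sub_of_hasDerivAt key hint]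
  norm_num [Real.zero_rpow h2']

private lemma int_eqOn {f g : ℝ → ℝ} {a b : ℝ} (hab : a ≤ b)
    (hg : IntervalIntegrable g volume a b) (h : Set.EqOn g f (Set.Ioc a b)) :
    IntervalIntegrable f volume a b := by
  rw [intervalIntegrable_iff_integrableOn_Ioc_of_le hab] at *
  exact hg.congr_fun h measurableSet_Ioc

private lemma int_neg_half (c r : ℝ) (hc : 1 ≤ c) (h1 : 0 < r + 1) :
    IntervalIntegrable (fun x : ℝ => (1 - |x|) * (c + x) ^ r) volume (-1) 0 := by
  rcases eq_or_lt_of_le hc with h | h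
  · subst h
    apply int_eqOn (by norm_num) (g := fun x : ℝ => ((1:ℝ) + x) ^ (r+1))
    · apply ContinuousOn.intervalIntegrable
      apply ContinuousOn.rpow_const (by fun_prop)
      intro x hx
      exact Or.inr (by linarith)
    · intro x hx
      have hb : (0:ℝ) ≤ 1 + x := by linarith [hx.1]
      have ha : |x| = -x := abs_of_nonpos hx.2
      simp only
      rw [show r + 1 = 1 + r from by ring,
        Real.rpow_add' hb (by linarith : (1:ℝ) + r ≠ 0), Real.rpow_one, ha]
      ring
  · apply int_eqOn (by norm_num) (g := fun x : ℝ => (1 - |x|) * (c + x) ^ r)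
    · apply ContinuousOn.intervalIntegrable
      apply ContinuousOn.mul (by fun_prop)
      apply ContinuousOn.rpow_const (by fun_prop)
      intro x hx
      rw [Set.uIcc_of_le (by norm_num)] at hx
      exact Or.inl (by nlinarith [hx.1])
    · exact fun x _ => rfl

private lemma int_pos_half (c r : ℝ) (hc : 1 ≤ c) :
    IntervalIntegrable (fun x : ℝ => (1 - |x|) * (c + x) ^ r) volume 0 1 := by
  apply ContinuousOn.intervalIntegrable
  apply ContinuousOn.mul (by fun_prop)
  apply ContinuousOn.rpow_const (by fun_prop)
  intro x hx
  rw [Set.uIcc_of_le (by norm_num)] at hx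
  exact Or.inl (by nlinarith [hx.1])

private lemma intg (c r : ℝ) (hc : 1 ≤ c) (h1 : 0 < r + 1) :
    IntervalIntegrable (fun x : ℝ => (1 - |x|) * (c + x) ^ r) volume (-1) 1 :=
  (int_neg_half c r hc h1).trans (int_pos_half c r hc)

private lemma congr_neg_half (c r : ℝ) :
    ∫ x in (-1:ℝ)..0, (1 - |x|) * (c + x) ^ r
      = ∫ x in (-1:ℝ)..0, (1 + x) * (c + x) ^ r := by
  apply intervalIntegral.integral_congr
  intro x hx
  rw [Set.uIcc_of_le (by norm_num)] at hx
  simp only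
  rw [abs_of_nonpos hx.2]
  ring_nf

private lemma congr_pos_half (c r : ℝ) :
    ∫ x in (0:ℝ)..1, (1 - |x|) * (c + x) ^ r
      = ∫ x in (0:ℝ)..1, (1 - x) * (c + x) ^ r := by
  apply intervalIntegral.integral_congr
  intro x hx
  rw [Set.uIcc_of_le (by norm_num)] at hx
  simp only
  rw [abs_of_nonneg hx.1]

private lemma lemC (c r : ℝ) (hc : 1 ≤ c) (h1 : 0 < r + 1) (h2 : 1 ≤ r + 2) :
    ∫ x in (-1:ℝ)..1, (1 - |x|) * (c + x) ^ r
      = ((c+1)^(r+2) + (c-1)^(r+2) - 2*c^(r+2)) / ((r+1)*(r+2)) := by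
  have h1' : r + 1 ≠ 0 := ne_of_gt h1
  have h2' : r + 2 ≠ 0 := by linarith
  rw [← intervalIntegral.integral_add_adjacent_intervals
    (int_neg_half c r hc h1) (int_pos_half c r hc), congr_neg_half, congr_pos_half,
    piece_pos c r (by linarith) h1' h2']
  rcases eq_or_lt_of_le hc with h | h
  · subst h
    rw [piece_neg_one r h1 h2]
    norm_num [Real.zero_rpow h2', Real.one_rpow]
    field_simp
    ring
  · rw [piece_neg c r h h1' h2']
    field_simp
    ring

private lemma lemA (c r : ℝ) (hc : 1 < c) (h1 : r + 1 ≠ 0) (h2 : r + 2 ≠ 0) :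
    ∫ x in (-1:ℝ)..1, (1 - |x|) * (c + x) ^ r
      = ((c+1)^(r+2) + (c-1)^(r+2) - 2*c^(r+2)) / ((r+1)*(r+2)) := by
  have ineg : IntervalIntegrable (fun x : ℝ => (1 - |x|) * (c + x) ^ r) volume (-1) 0 := by
    apply ContinuousOn.intervalIntegrable
    apply ContinuousOn.mul (by fun_prop)
    apply ContinuousOn.rpow_const (by fun_prop)
    intro x hx
    rw [Set.uIcc_of_le (by norm_num)] at hx
    exact Or.inl (by nlinarith [hx.1])
  rw [← intervalIntegral.integral_add_adjacent_intervals
    ineg (int_pos_half c r (le_of_lt hc)), congr_neg_half, congr_pos_half,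
    piece_pos c r (by linarith) h1 h2, piece_neg c r hc h1 h2]
  field_simp
  ring

private lemma lemA' (c r : ℝ) (hc : 1 < c) (h1 : r + 1 ≠ 0) (h2 : r + 2 ≠ 0) :
    ∫ x in (-1:ℝ)..1, (1 - |x|) * (c - x) ^ r
      = ((c+1)^(r+2) + (c-1)^(r+2) - 2*c^(r+2)) / ((r+1)*(r+2)) := by
  have h := intervalIntegral.integral_comp_neg (a := (-1:ℝ)) (b := 1)
    (fun t : ℝ => (1 - |t|) * (c + t) ^ r)
  simp only [abs_neg, ← sub_eq_add_neg, neg_neg] at h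
  rw [h]
  exact lemA c r hc h1 h2
theorem stmt_0 (s : ℝ) (hs : s ∈ Set.Ioo (0:ℝ) 1) (hs2 : s ≠ 1/2)
    (k : ℤ) (hk : 2 ≤ k) :
    (∫ y in (-1:ℝ)..1, ∫ x in (-1:ℝ)..1,
        (1 - |x|) * (1 - |y|) / |x - y - (k:ℝ)| ^ (1 + 2*s))
      = (4*((k:ℝ)+1)^(3-2*s) + 4*((k:ℝ)-1)^(3-2*s) - 6*(k:ℝ)^(3-2*s)
          - ((k:ℝ)+2)^(3-2*s) - ((k:ℝ)-2)^(3-2*s))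
        / (4*s*(1-2*s)*(1-s)*(3-2*s)) := by
  obtain ⟨hs0, hs1⟩ := hs
  have hk2 : (2:ℝ) ≤ (k:ℝ) := by exact_mod_cast hk
  have hq1 : (0:ℝ) < (1-2*s) + 1 := by linarith
  have hq2 : (1:ℝ) ≤ (1-2*s) + 2 := by linarith
  have h2s : (1:ℝ) - 2*s ≠ 0 := by
    intro h; apply hs2; linarith
  have step1 : (∫ y in (-1:ℝ)..1, ∫ x in (-1:ℝ)..1,
        (1 - |x|) * (1 - |y|) / |x - y - (k:ℝ)| ^ (1 + 2*s))
      = ∫ y in (-1:ℝ)..1,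
          (((1 - |y|) * (((k:ℝ)+1) + y) ^ (1-2*s)
            + (1 - |y|) * (((k:ℝ)-1) + y) ^ (1-2*s))
            - 2 * ((1 - |y|) * ((k:ℝ) + y) ^ (1-2*s))) / ((-(2*s)) * (1-2*s)) := by
    apply intervalIntegral.integral_congr_ae
    apply Filter.Eventually.of_forall
    intro y hy
    rw [Set.uIoc_of_le (by norm_num)] at hy
    have hy1 : -1 < y := hy.1
    have hy2 : y ≤ 1 := hy.2
    have hc : 1 < (k:ℝ) + y := by linarith
    have e1 : (∫ x in (-1:ℝ)..1, (1 - |x|) * (1 - |y|) / |x - y - (k:ℝ)| ^ (1 + 2*s))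
        = ∫ x in (-1:ℝ)..1, (1 - |y|) * ((1 - |x|) * (((k:ℝ) + y) - x) ^ (-(1 + 2*s))) := by
      apply intervalIntegral.integral_congr
      intro x hx
      rw [Set.uIcc_of_le (by norm_num)] at hx
      simp only
      have hlt : x - y - (k:ℝ) < 0 := by linarith [hx.2]
      rw [abs_of_neg hlt, show -(x - y - (k:ℝ)) = ((k:ℝ) + y) - x from by ring,
        Real.rpow_neg (by linarith [hx.2] : (0:ℝ) ≤ ((k:ℝ)+y) - x), div_eq_mul_inv]
      ring
    rw [e1, intervalIntegral.integral_const_mul,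
      lemA' ((k:ℝ)+y) (-(1+2*s)) hc
        (ne_of_lt (by linarith : -(1+2*s)+1 < 0))
        (by intro h; apply hs2; linarith)]
    rw [show -(1+2*s)+2 = 1-2*s from by ring, show -(1+2*s)+1 = -(2*s) from by ring,
      show (k:ℝ)+y+1 = ((k:ℝ)+1)+y from by ring,
      show (k:ℝ)+y-1 = ((k:ℝ)-1)+y from by ring]
    ring
  rw [step1, intervalIntegral.integral_div]
  have I1 := intg ((k:ℝ)+1) (1-2*s) (by linarith) hq1
  have I2 := intg ((k:ℝ)-1) (1-2*s) (by linarith) hq1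
  have I3 := intg ((k:ℝ)) (1-2*s) (by linarith) hq1
  rw [intervalIntegral.integral_sub (I1.add I2) (I3.const_mul 2),
      intervalIntegral.integral_add I1 I2, intervalIntegral.integral_const_mul,
      lemC ((k:ℝ)+1) (1-2*s) (by linarith) hq1 hq2,
      lemC ((k:ℝ)-1) (1-2*s) (by linarith) hq1 hq2,
      lemC ((k:ℝ)) (1-2*s) (by linarith) hq1 hq2]
  rw [show (k:ℝ)+1+1 = (k:ℝ)+2 from by ring, show (k:ℝ)+1-1 = (k:ℝ) from by ring,
      show (k:ℝ)-1+1 = (k:ℝ) from by ring, show (k:ℝ)-1-1 = (k:ℝ)-2 from by ring,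
      show (1:ℝ)-2*s+2 = 3-2*s from by ring, show (1:ℝ)-2*s+1 = 2-2*s from by ring]
  have hs0' : s ≠ 0 := ne_of_gt hs0
  have h22 : (2:ℝ)-2*s ≠ 0 := ne_of_gt (by linarith)
  have h32 : (3:ℝ)-2*s ≠ 0 := ne_of_gt (by linarith)
  have h1s : (1:ℝ)-s ≠ 0 := ne_of_gt (by linarith)
  field_simp
  ring
end

section
/- The double integral 2∫_{-1}^{1} ∫_{-1}^{1} (1-|x|)(1-|y|)/(2+y-x)^{2} dx dy equals 36 ln 3 - 56 ln 2. -/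
open Real

noncomputable def G1 (y : ℝ) : ℝ :=
  2*(3*((2+y)*Real.log (2+y) - (2+y)) - ((2+y)^2/2*Real.log (2+y) - (2+y)^2/4))
  - (2*((1+y)*Real.log (1+y) - (1+y)) - ((1+y)^2/2*Real.log (1+y) - (1+y)^2/4))
  - (4*((3+y)*Real.log (3+y) - (3+y)) - ((3+y)^2/2*Real.log (3+y) - (3+y)^2/4))

noncomputable def G2 (y : ℝ) : ℝ :=
  2*(((2+y)^2/2*Real.log (2+y) - (2+y)^2/4) - ((2+y)*Real.log (2+y) - (2+y)))
  - ((1+y)^2/2*Real.log (1+y) - (1+y)^2/4)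
  - (((3+y)^2/2*Real.log (3+y) - (3+y)^2/4) - 2*((3+y)*Real.log (3+y) - (3+y)))

lemma hasDerivAt_aux (c x : ℝ) (hc : 0 < c + x) :
    HasDerivAt (fun y : ℝ => (c+y)^2/2 * Real.log (c+y) - (c+y)^2/4)
      ((c+x) * Real.log (c+x)) x := by
  have d1 : HasDerivAt (fun y : ℝ => c + y) 1 x := (hasDerivAt_id x).const_add c
  have dlog := d1.log (ne_of_gt hc)
  have dsq : HasDerivAt (fun y : ℝ => (c+y)^2) (2*(c+x)^1*1) x := d1.pow 2
  have := ((dsq.div_const 2).mul dlog).sub (dsq.div_const 4)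
  refine this.congr_deriv ?_
  field_simp
  ring

lemma hasDerivAt_aux2 (c x : ℝ) (hc : 0 < c + x) :
    HasDerivAt (fun y : ℝ => (c+y) * Real.log (c+y) - (c+y)) (Real.log (c+x)) x := by
  have d1 : HasDerivAt (fun y : ℝ => c + y) 1 x := (hasDerivAt_id x).const_add c
  have dlog := d1.log (ne_of_gt hc)
  have := (d1.mul dlog).sub d1
  refine this.congr_deriv ?_
  field_simp
  ring

lemma G1_deriv (x : ℝ) (hx : 0 < 1 + x) :
    HasDerivAt G1 (2*(1-x)*Real.log (2+x) - (1-x)*Real.log (1+x) - (1-x)*Real.log (3+x)) x := by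
  have h1 : (0:ℝ) < 1 + x := hx
  have h2 : (0:ℝ) < 2 + x := by linarith
  have h3 : (0:ℝ) < 3 + x := by linarith
  have a1 := hasDerivAt_aux 1 x h1
  have a2 := hasDerivAt_aux 2 x h2
  have a3 := hasDerivAt_aux 3 x h3
  have b1 := hasDerivAt_aux2 1 x h1
  have b2 := hasDerivAt_aux2 2 x h2
  have b3 := hasDerivAt_aux2 3 x h3
  have h := (((b2.const_mul 3).sub a2).const_mul 2).sub ((b1.const_mul 2).sub a1)
    |>.sub ((b3.const_mul 4).sub a3)
  unfold G1
  refine h.congr_deriv ?_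
  ring

lemma G2_deriv (x : ℝ) (hx : 0 < 1 + x) :
    HasDerivAt G2 (2*(1+x)*Real.log (2+x) - (1+x)*Real.log (1+x) - (1+x)*Real.log (3+x)) x := by
  have h1 : (0:ℝ) < 1 + x := hx
  have h2 : (0:ℝ) < 2 + x := by linarith
  have h3 : (0:ℝ) < 3 + x := by linarith
  have a1 := hasDerivAt_aux 1 x h1
  have a2 := hasDerivAt_aux 2 x h2
  have a3 := hasDerivAt_aux 3 x h3
  have b1 := hasDerivAt_aux2 1 x h1
  have b2 := hasDerivAt_aux2 2 x h2
  have b3 := hasDerivAt_aux2 3 x h3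
  have h := (((a2.sub b2).const_mul 2).sub a1).sub (a3.sub (b3.const_mul 2))
  unfold G2
  refine h.congr_deriv ?_
  ring

lemma cont_mul_log_comp : Continuous (fun y : ℝ => (1+y) * Real.log (1+y)) :=
  Real.continuous_mul_log.comp (continuous_const.add continuous_id)

lemma cont_sq_log : Continuous (fun y : ℝ => (1+y)^2/2 * Real.log (1+y)) := by
  have h : (fun y : ℝ => (1+y)^2/2 * Real.log (1+y))
      = fun y => (1+y)/2 * ((1+y) * Real.log (1+y)) := by funext y; ring
  rw [h]
  exact ((continuous_const.add continuous_id).div_const 2).mul cont_mul_log_comp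

lemma contOn_log23 {c : ℝ} (hc : 1 < c) :
    ContinuousOn (fun y : ℝ => Real.log (c+y)) (Set.Icc (-1:ℝ) 0) := by
  apply ContinuousOn.log
  · exact (continuous_const.add continuous_id).continuousOn
  · intro y hy
    have := hy.1
    have : (0:ℝ) < c + y := by linarith [hy.1]
    exact ne_of_gt this

lemma G2_contOn : ContinuousOn G2 (Set.Icc (-1:ℝ) 0) := by
  unfold G2
  have h2 := contOn_log23 (c := 2) (by norm_num)
  have h3 := contOn_log23 (c := 3) (by norm_num)
  have p2 : ContinuousOn (fun y : ℝ => (2+y)^2/2) (Set.Icc (-1:ℝ) 0) := by fun_prop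
  have p2' : ContinuousOn (fun y : ℝ => (2+y)) (Set.Icc (-1:ℝ) 0) := by fun_prop
  have p3 : ContinuousOn (fun y : ℝ => (3+y)^2/2) (Set.Icc (-1:ℝ) 0) := by fun_prop
  have p3' : ContinuousOn (fun y : ℝ => (3+y)) (Set.Icc (-1:ℝ) 0) := by fun_prop
  exact ((continuousOn_const.mul (((p2.mul h2).sub (by fun_prop)).sub
      ((p2'.mul h2).sub (by fun_prop)))).sub
    ((cont_sq_log.continuousOn).sub (by fun_prop))).sub
    (((p3.mul h3).sub (by fun_prop)).sub (continuousOn_const.mul ((p3'.mul h3).sub (by fun_prop))))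


lemma inner_eq (y : ℝ) (hy : y ∈ Set.uIcc (-1:ℝ) 1) :
    (∫ x in (-1:ℝ)..1, (1 - |x|) * (1 - |y|) / (2 + y - x) ^ (2:ℕ))
      = (1 - |y|) * (2 * Real.log (2+y) - Real.log (1+y) - Real.log (3+y)) := by
  rw [Set.uIcc_of_le (by norm_num : (-1:ℝ) ≤ 1)] at hy
  obtain ⟨hy1, hy2⟩ := hy
  by_cases hone : |y| = 1
  · simp [hone]
  · have hy1' : -1 < y := lt_of_le_of_ne hy1 (by rintro rfl; simp at hone)
    have hy2' : y < 1 := lt_of_le_of_ne hy2 (by rintro rfl; simp at hone)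
    have h1y : (0:ℝ) < 1 + y := by linarith
    have h2y : (0:ℝ) < 2 + y := by linarith
    have h3y : (0:ℝ) < 3 + y := by linarith
    have key : ∀ x : ℝ, (1 - |x|) * (1 - |y|) / (2 + y - x) ^ (2:ℕ)
        = (1 - |y|) * ((1 - |x|) / (2 + y - x) ^ (2:ℕ)) := fun x => by ring
    simp_rw [key, intervalIntegral.integral_const_mul]
    congr 1
    have hden : ∀ x ∈ Set.Icc (-1:ℝ) 1, (0:ℝ) < 2 + y - x := by
      intro x hx; have := hx.2; linarith
    have hcont : ContinuousOn (fun x : ℝ => (1 - |x|) / (2 + y - x) ^ (2:ℕ))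
        (Set.Icc (-1:ℝ) 1) := by
      apply ContinuousOn.div
      · exact (continuous_const.sub continuous_abs).continuousOn
      · exact (((continuous_const.sub continuous_id).pow 2)).continuousOn
      · intro x hx; exact pow_ne_zero _ (ne_of_gt (hden x hx))
    have hsub1 : Set.uIcc (-1:ℝ) 0 ⊆ Set.Icc (-1:ℝ) 1 := by
      rw [Set.uIcc_of_le (by norm_num : (-1:ℝ) ≤ 0)]
      exact Set.Icc_subset_Icc le_rfl (by norm_num)
    have hsub2 : Set.uIcc (0:ℝ) 1 ⊆ Set.Icc (-1:ℝ) 1 := by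
      rw [Set.uIcc_of_le (by norm_num : (0:ℝ) ≤ 1)]
      exact Set.Icc_subset_Icc (by norm_num) le_rfl
    rw [← intervalIntegral.integral_add_adjacent_intervals (a := (-1:ℝ)) (b := 0) (c := 1)
      ((hcont.mono hsub1).intervalIntegrable) ((hcont.mono hsub2).intervalIntegrable)]
    have piece1 : (∫ x in (-1:ℝ)..0, (1 - |x|) / (2 + y - x) ^ (2:ℕ))
        = (Real.log (2+y) + (3+y)/(2+y)) - (Real.log (3+y) + (3+y)/(3+y)) := by
      have e0 : (2:ℝ) + y - 0 = 2 + y := by ring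
      have e1 : (2:ℝ) + y - (-1) = 3 + y := by ring
      rw [intervalIntegral.integral_congr (g := fun x : ℝ => (1 + x) / (2 + y - x) ^ (2:ℕ))
        (by
          intro x hx
          rw [Set.uIcc_of_le (by norm_num : (-1:ℝ) ≤ 0)] at hx
          simp only
          rw [abs_of_nonpos hx.2]; ring)]
      have := intervalIntegral.integral_eq_sub_of_hasDerivAt
        (f := fun x : ℝ => Real.log (2 + y - x) + (3+y)/(2 + y - x))
        (f' := fun x : ℝ => (1 + x) / (2 + y - x) ^ (2:ℕ))
        (a := (-1:ℝ)) (b := 0)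
        (by
          intro x hx
          rw [Set.uIcc_of_le (by norm_num : (-1:ℝ) ≤ 0)] at hx
          have hd : (0:ℝ) < 2 + y - x := hden x ⟨hx.1, le_trans hx.2 (by norm_num)⟩
          have d1 : HasDerivAt (fun x : ℝ => 2 + y - x) (-1) x := by
            simpa using (hasDerivAt_id x).const_sub (2 + y)
          have dlog := d1.log (ne_of_gt hd)
          have ddiv := (hasDerivAt_const x (3+y)).div d1 (ne_of_gt hd)
          refine (dlog.add ddiv).congr_deriv ?_
          field_simp
          ring)
        (by
          apply ContinuousOn.intervalIntegrable
          apply ContinuousOn.div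
          · exact (continuous_const.add continuous_id).continuousOn
          · exact (((continuous_const.sub continuous_id).pow 2)).continuousOn
          · intro x hx
            exact pow_ne_zero _ (ne_of_gt (hden x (hsub1 hx))))
      rw [this]
      rw [e0, e1]
    have piece2 : (∫ x in (0:ℝ)..1, (1 - |x|) / (2 + y - x) ^ (2:ℕ))
        = (-Real.log (1+y) + -((1+y)/(1+y))) - (-Real.log (2+y) + -((1+y)/(2+y))) := by
      have e0 : (2:ℝ) + y - 0 = 2 + y := by ring
      have e1 : (2:ℝ) + y - 1 = 1 + y := by ring
      rw [intervalIntegral.integral_congr (g := fun x : ℝ => (1 - x) / (2 + y - x) ^ (2:ℕ))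
        (by
          intro x hx
          rw [Set.uIcc_of_le (by norm_num : (0:ℝ) ≤ 1)] at hx
          simp only
          rw [abs_of_nonneg hx.1])]
      have := intervalIntegral.integral_eq_sub_of_hasDerivAt
        (f := fun x : ℝ => -Real.log (2 + y - x) + -((1+y)/(2 + y - x)))
        (f' := fun x : ℝ => (1 - x) / (2 + y - x) ^ (2:ℕ))
        (a := (0:ℝ)) (b := 1)
        (by
          intro x hx
          rw [Set.uIcc_of_le (by norm_num : (0:ℝ) ≤ 1)] at hx
          have hd : (0:ℝ) < 2 + y - x := hden x ⟨le_trans (by norm_num) hx.1, hx.2⟩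
          have d1 : HasDerivAt (fun x : ℝ => 2 + y - x) (-1) x := by
            simpa using (hasDerivAt_id x).const_sub (2 + y)
          have dlog := (d1.log (ne_of_gt hd)).neg
          have ddiv := ((hasDerivAt_const x (1+y)).div d1 (ne_of_gt hd)).neg
          refine (dlog.add ddiv).congr_deriv ?_
          field_simp
          ring)
        (by
          apply ContinuousOn.intervalIntegrable
          apply ContinuousOn.div
          · exact (continuous_const.sub continuous_id).continuousOn
          · exact (((continuous_const.sub continuous_id).pow 2)).continuousOn
          · intro x hx
            exact pow_ne_zero _ (ne_of_gt (hden x (hsub2 hx))))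
      rw [this]
      rw [e0, e1]
    rw [piece1, piece2]
    rw [div_self (ne_of_gt h1y), div_self (ne_of_gt h3y)]

    have hsum : (1+y)/(2+y) + (3+y)/(2+y) = 2 := by
      rw [← add_div, div_eq_iff (ne_of_gt h2y)]; ring
    linarith [hsum]

lemma contOn_log01 {c : ℝ} (hc : 0 < c) :
    ContinuousOn (fun y : ℝ => Real.log (c+y)) (Set.Icc (0:ℝ) 1) := by
  apply ContinuousOn.log
  · exact (continuous_const.add continuous_id).continuousOn
  · intro y hy
    have : (0:ℝ) < c + y := by linarith [hy.1]
    exact ne_of_gt this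

lemma g2_contOn : ContinuousOn
    (fun y : ℝ => 2*(1+y)*Real.log (2+y) - (1+y)*Real.log (1+y) - (1+y)*Real.log (3+y))
    (Set.Icc (-1:ℝ) 0) := by
  have h2 := contOn_log23 (c := 2) (by norm_num)
  have h3 := contOn_log23 (c := 3) (by norm_num)
  exact ((((by fun_prop : ContinuousOn (fun y : ℝ => 2*(1+y)) (Set.Icc (-1:ℝ) 0)).mul h2).sub
    cont_mul_log_comp.continuousOn).sub
    ((by fun_prop : ContinuousOn (fun y : ℝ => (1+y)) (Set.Icc (-1:ℝ) 0)).mul h3))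

lemma g1_contOn : ContinuousOn
    (fun y : ℝ => 2*(1-y)*Real.log (2+y) - (1-y)*Real.log (1+y) - (1-y)*Real.log (3+y))
    (Set.Icc (0:ℝ) 1) := by
  have h1 := contOn_log01 (c := 1) (by norm_num)
  have h2 := contOn_log01 (c := 2) (by norm_num)
  have h3 := contOn_log01 (c := 3) (by norm_num)
  exact ((((by fun_prop : ContinuousOn (fun y : ℝ => 2*(1-y)) (Set.Icc (0:ℝ) 1)).mul h2).sub
    ((by fun_prop : ContinuousOn (fun y : ℝ => (1-y)) (Set.Icc (0:ℝ) 1)).mul h1)).sub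
    ((by fun_prop : ContinuousOn (fun y : ℝ => (1-y)) (Set.Icc (0:ℝ) 1)).mul h3))

theorem stmt_2 :
    2 * (∫ y in (-1:ℝ)..1, ∫ x in (-1:ℝ)..1,
        (1 - |x|) * (1 - |y|) / (2 + y - x) ^ (2:ℕ))
      = 36 * Real.log 3 - 56 * Real.log 2 := by
  rw [intervalIntegral.integral_congr
    (g := fun y : ℝ => (1-|y|)*(2*Real.log (2+y) - Real.log (1+y) - Real.log (3+y)))
    (fun y hy => inner_eq y hy)]
  have s1 : Set.uIcc (-1:ℝ) 0 = Set.Icc (-1:ℝ) 0 := Set.uIcc_of_le (by norm_num)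
  have s2 : Set.uIcc (0:ℝ) 1 = Set.Icc (0:ℝ) 1 := Set.uIcc_of_le (by norm_num)
  have eq1 : Set.EqOn (fun y : ℝ => (1-|y|)*(2*Real.log (2+y) - Real.log (1+y) - Real.log (3+y)))
      (fun y : ℝ => 2*(1+y)*Real.log (2+y) - (1+y)*Real.log (1+y) - (1+y)*Real.log (3+y))
      (Set.Icc (-1:ℝ) 0) := by
    intro y hy
    simp only
    rw [abs_of_nonpos hy.2]; ring
  have eq2 : Set.EqOn (fun y : ℝ => (1-|y|)*(2*Real.log (2+y) - Real.log (1+y) - Real.log (3+y)))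
      (fun y : ℝ => 2*(1-y)*Real.log (2+y) - (1-y)*Real.log (1+y) - (1-y)*Real.log (3+y))
      (Set.Icc (0:ℝ) 1) := by
    intro y hy
    simp only
    rw [abs_of_nonneg hy.1]; ring
  have int1' : IntervalIntegrable
      (fun y : ℝ => 2*(1+y)*Real.log (2+y) - (1+y)*Real.log (1+y) - (1+y)*Real.log (3+y))
      MeasureTheory.volume (-1) 0 := by
    apply ContinuousOn.intervalIntegrable; rw [s1]; exact g2_contOn
  have int2' : IntervalIntegrable
      (fun y : ℝ => 2*(1-y)*Real.log (2+y) - (1-y)*Real.log (1+y) - (1-y)*Real.log (3+y))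
      MeasureTheory.volume 0 1 := by
    apply ContinuousOn.intervalIntegrable; rw [s2]; exact g1_contOn
  have int1 : IntervalIntegrable
      (fun y : ℝ => (1-|y|)*(2*Real.log (2+y) - Real.log (1+y) - Real.log (3+y)))
      MeasureTheory.volume (-1) 0 := by
    apply ContinuousOn.intervalIntegrable; rw [s1]
    exact g2_contOn.congr eq1
  have int2 : IntervalIntegrable
      (fun y : ℝ => (1-|y|)*(2*Real.log (2+y) - Real.log (1+y) - Real.log (3+y)))
      MeasureTheory.volume 0 1 := by
    apply ContinuousOn.intervalIntegrable; rw [s2]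
    exact g1_contOn.congr eq2
  rw [← intervalIntegral.integral_add_adjacent_intervals (b := 0) int1 int2]
  have p1 : (∫ y in (-1:ℝ)..0, (1-|y|)*(2*Real.log (2+y) - Real.log (1+y) - Real.log (3+y)))
      = G2 0 - G2 (-1) := by
    rw [intervalIntegral.integral_congr (by rw [s1]; exact eq1)]
    exact intervalIntegral.integral_eq_sub_of_hasDerivAt_of_le (by norm_num) G2_contOn
      (fun x hx => G2_deriv x (by linarith [hx.1])) int1'
  have p2 : (∫ y in (0:ℝ)..1, (1-|y|)*(2*Real.log (2+y) - Real.log (1+y) - Real.log (3+y)))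
      = G1 1 - G1 0 := by
    rw [intervalIntegral.integral_congr (by rw [s2]; exact eq2)]
    exact intervalIntegral.integral_eq_sub_of_hasDerivAt
      (fun x hx => G1_deriv x (by rw [s2] at hx; linarith [hx.1])) int2'
  rw [p1, p2]
  have l4 : Real.log 4 = 2 * Real.log 2 := by
    rw [show (4:ℝ) = 2^2 by norm_num, Real.log_pow]; push_cast; ring
  simp only [G1, G2]
  norm_num [Real.log_one, Real.log_zero]
  linarith [l4]
end

section
/- For s ∈ (0,1), s ≠ 1/2, the double integral -2∫_0^1 ∫_{-1}^0 (1+x)(1-y)/(y-x+1)^{1+2s} dx dy equals (13 - 5·2^{3-2s} + 3^{3-2s} + s(2^{4-2s} - 14) + 4s^2)/(2s(1-2s)(1-s)(3-2s)). -/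
open Real

theorem stmt_6 (s : ℝ) (hs : s ∈ Set.Ioo (0:ℝ) 1) (hs2 : s ≠ 1/2) :
    -2 * (∫ y in (0:ℝ)..1, ∫ x in (-1:ℝ)..0,
        (1 + x) * (1 - y) / (y - x + 1) ^ (1 + 2*s))
      = (13 - 5 * (2:ℝ) ^ (3 - 2*s) + (3:ℝ) ^ (3 - 2*s)
          + s * ((2:ℝ) ^ (4 - 2*s) - 14) + 4*s^2)
        / (2*s*(1 - 2*s)*(1 - s)*(3 - 2*s)) := by
  obtain ⟨hs0, hs1⟩ := hs
  have h2s : (0:ℝ) < 2*s := by linarith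
  have hc1 : (1:ℝ) - 2*s ≠ 0 := fun h => hs2 (by linarith)
  have hc2 : (2:ℝ) - 2*s ≠ 0 := ne_of_gt (by linarith)
  have hc3 : (3:ℝ) - 2*s ≠ 0 := ne_of_gt (by linarith)
  have h1s : (1:ℝ) - s ≠ 0 := ne_of_gt (by linarith)
  -- inner integral
  have hinner : ∀ y ∈ Set.uIcc (0:ℝ) 1,
      (∫ x in (-1:ℝ)..0, (1 + x) * (1 - y) / (y - x + 1) ^ (1 + 2*s))
        = ((1-y)*((y+2)*(y+1)^(-(2*s))/(2*s) + (y+1)^(1-2*s)/(1-2*s))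
          - (1-y)*((y+2)*(y+2)^(-(2*s))/(2*s) + (y+2)^(1-2*s)/(1-2*s))) := by
    intro y hy
    rw [Set.uIcc_of_le (by norm_num : (0:ℝ) ≤ 1)] at hy
    have hy0 : 0 ≤ y := hy.1
    have key : ∀ x ∈ Set.uIcc (-1:ℝ) 0,
        HasDerivAt (fun x => (1-y)*((y+2)*(y-x+1)^(-(2*s))/(2*s)
            + (y-x+1)^(1-2*s)/(1-2*s)))
          ((1 + x) * (1 - y) / (y - x + 1) ^ (1 + 2*s)) x := by
      intro x hx
      rw [Set.uIcc_of_le (by norm_num : (-1:ℝ) ≤ 0)] at hx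
      have hb : (0:ℝ) < y - x + 1 := by linarith [hx.2]
      have d1 : HasDerivAt (fun t => (y - t + 1) ^ (-(2*s)))
          (-1 * (-(2*s)) * (y-x+1)^(-(2*s)-1)) x :=
        (((hasDerivAt_id x).const_sub y).add_const 1).rpow_const (Or.inl hb.ne')
      have d2 : HasDerivAt (fun t => (y - t + 1) ^ (1-2*s))
          (-1 * (1-2*s) * (y-x+1)^((1-2*s)-1)) x :=
        (((hasDerivAt_id x).const_sub y).add_const 1).rpow_const (Or.inl hb.ne')
      have D := (((d1.const_mul (y+2)).div_const (2*s)).add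
          (d2.div_const (1-2*s))).const_mul (1-y)
      refine D.congr_deriv ?_
      have r1 : (y-x+1)^(-(2*s)-1) = ((y-x+1)^(2*s) * (y-x+1))⁻¹ := by
        rw [show -(2*s)-1 = -(2*s+1) by ring, rpow_neg hb.le, rpow_add hb, rpow_one]
      have r2 : (y-x+1)^((1-2*s)-1) = ((y-x+1)^(2*s))⁻¹ := by
        rw [show (1:ℝ)-2*s-1 = -(2*s) by ring, rpow_neg hb.le]
      have r3 : (y-x+1)^(1+2*s) = (y-x+1) * (y-x+1)^(2*s) := by
        rw [rpow_add hb, rpow_one]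
      have hP : (y-x+1)^(2*s) ≠ 0 := (rpow_pos_of_pos hb _).ne'
      rw [r1, r2, r3]
      field_simp
      ring
    have hint : IntervalIntegrable
        (fun x => (1 + x) * (1 - y) / (y - x + 1) ^ (1 + 2*s))
        MeasureTheory.volume (-1) 0 := by
      apply ContinuousOn.intervalIntegrable
      rw [Set.uIcc_of_le (by norm_num : (-1:ℝ) ≤ 0)]
      have hbx : ∀ x ∈ Set.Icc (-1:ℝ) 0, (0:ℝ) < y - x + 1 := by
        intro x hx; linarith [hx.2]
      apply ContinuousOn.div
      · fun_prop
      · exact ContinuousOn.rpow_const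
          ((continuous_const.sub continuous_id).add continuous_const).continuousOn
          (fun x hx => Or.inl (hbx x hx).ne')
      · intro x hx
        exact (rpow_pos_of_pos (hbx x hx) _).ne'
    rw [intervalIntegral.integral_eq_sub_of_hasDerivAt key hint]
    have e0 : y - 0 + 1 = y + 1 := by ring
    have e1 : y - (-1) + 1 = y + 2 := by ring
    simp only [e0, e1]
  rw [intervalIntegral.integral_congr hinner]
  -- outer integral
  have key2 : ∀ y ∈ Set.uIcc (0:ℝ) 1,
      HasDerivAt (fun y =>
        (1/(2*s)) * (2*(y+1)^(1-2*s)/(1-2*s) + (y+1)^(2-2*s)/(2-2*s)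
            - (y+1)^(3-2*s)/(3-2*s))
        + (1/(1-2*s)) * (2*(y+1)^(2-2*s)/(2-2*s) - (y+1)^(3-2*s)/(3-2*s))
        - (1/(2*s)+1/(1-2*s)) * (3*(y+2)^(2-2*s)/(2-2*s) - (y+2)^(3-2*s)/(3-2*s)))
        ((1-y)*((y+2)*(y+1)^(-(2*s))/(2*s) + (y+1)^(1-2*s)/(1-2*s))
          - (1-y)*((y+2)*(y+2)^(-(2*s))/(2*s) + (y+2)^(1-2*s)/(1-2*s))) y := by
    intro y hy
    rw [Set.uIcc_of_le (by norm_num : (0:ℝ) ≤ 1)] at hy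
    have h1 : (0:ℝ) < y + 1 := by linarith [hy.1]
    have h2 : (0:ℝ) < y + 2 := by linarith [hy.1]
    have dp : ∀ (k p : ℝ), 0 < y + k → HasDerivAt (fun t => (t + k) ^ p)
        (1 * p * (y+k)^(p-1)) y := fun k p h =>
      ((hasDerivAt_id y).add_const k).rpow_const (Or.inl h.ne')
    have D := ((((((dp 1 (1-2*s) h1).const_mul 2).div_const (1-2*s)).add
        ((dp 1 (2-2*s) h1).div_const (2-2*s))).sub
        ((dp 1 (3-2*s) h1).div_const (3-2*s))).const_mul (1/(2*s))).add
      (((((dp 1 (2-2*s) h1).const_mul 2).div_const (2-2*s)).sub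
        ((dp 1 (3-2*s) h1).div_const (3-2*s))).const_mul (1/(1-2*s)))
      |>.sub (((((dp 2 (2-2*s) h2).const_mul 3).div_const (2-2*s)).sub
        ((dp 2 (3-2*s) h2).div_const (3-2*s))).const_mul (1/(2*s)+1/(1-2*s)))
    refine D.congr_deriv ?_
    have q1 : (y+1:ℝ)^(1-2*s) = (y+1)*(y+1)^(-(2*s)) := by
      rw [show (1:ℝ)-2*s = 1 + -(2*s) by ring, rpow_add h1, rpow_one]
    have q2 : (y+1:ℝ)^(2-2*s) = (y+1)*(y+1)^(1-2*s) := by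
      rw [show (2:ℝ)-2*s = 1 + (1-2*s) by ring, rpow_add h1, rpow_one]
    have p1 : (y+2:ℝ)^(1-2*s) = (y+2)*(y+2)^(-(2*s)) := by
      rw [show (1:ℝ)-2*s = 1 + -(2*s) by ring, rpow_add h2, rpow_one]
    have p2 : (y+2:ℝ)^(2-2*s) = (y+2)*(y+2)^(1-2*s) := by
      rw [show (2:ℝ)-2*s = 1 + (1-2*s) by ring, rpow_add h2, rpow_one]
    rw [show (1:ℝ)-2*s-1 = -(2*s) by ring, show (2:ℝ)-2*s-1 = 1-2*s by ring,
      show (3:ℝ)-2*s-1 = 2-2*s by ring, q2, q1, p2, p1]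
    field_simp
    ring
  have hint2 : IntervalIntegrable (fun y =>
      (1-y)*((y+2)*(y+1)^(-(2*s))/(2*s) + (y+1)^(1-2*s)/(1-2*s))
        - (1-y)*((y+2)*(y+2)^(-(2*s))/(2*s) + (y+2)^(1-2*s)/(1-2*s)))
      MeasureTheory.volume 0 1 := by
    apply ContinuousOn.intervalIntegrable
    rw [Set.uIcc_of_le (by norm_num : (0:ℝ) ≤ 1)]
    have c1 : ∀ (k p : ℝ), 1 ≤ k → ContinuousOn (fun y : ℝ => (y + k) ^ p)
        (Set.Icc (0:ℝ) 1) := by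
      intro k p hk
      exact ContinuousOn.rpow_const (continuous_id.add continuous_const).continuousOn
        (fun y hy => Or.inl (by nlinarith [hy.1] : y + k ≠ 0))
    apply ContinuousOn.sub
    · exact (continuousOn_const.sub continuousOn_id).mul
        (((continuousOn_id.add continuousOn_const).mul (c1 1 _ le_rfl)).div_const _ |>.add
          ((c1 1 _ le_rfl).div_const _))
    · exact (continuousOn_const.sub continuousOn_id).mul
        (((continuousOn_id.add continuousOn_const).mul (c1 2 _ one_le_two)).div_const _ |>.add
          ((c1 2 _ one_le_two).div_const _))
  rw [intervalIntegral.integral_eq_sub_of_hasDerivAt key2 hint2]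
  norm_num
  have w1 : (2:ℝ)^(1-2*s) = 2 * 2^(-(2*s)) := by
    rw [show (1:ℝ)-2*s = 1 + -(2*s) by ring, rpow_add two_pos, rpow_one]
  have w2 : (2:ℝ)^(2-2*s) = 4 * 2^(-(2*s)) := by
    rw [show (2:ℝ)-2*s = 2 + -(2*s) by ring, rpow_add two_pos,
      show (2:ℝ) = ((2:ℕ):ℝ) by norm_num, rpow_natCast]; norm_num
  have w3 : (2:ℝ)^(3-2*s) = 8 * 2^(-(2*s)) := by
    rw [show (3:ℝ)-2*s = 3 + -(2*s) by ring, rpow_add two_pos,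
      show (3:ℝ) = ((3:ℕ):ℝ) by norm_num, rpow_natCast]; norm_num
  have w4 : (2:ℝ)^(4-2*s) = 16 * 2^(-(2*s)) := by
    rw [show (4:ℝ)-2*s = 4 + -(2*s) by ring, rpow_add two_pos,
      show (4:ℝ) = ((4:ℕ):ℝ) by norm_num, rpow_natCast]; norm_num
  have v2 : (3:ℝ)^(2-2*s) = 9 * 3^(-(2*s)) := by
    rw [show (2:ℝ)-2*s = 2 + -(2*s) by ring, rpow_add three_pos,
      show (2:ℝ) = ((2:ℕ):ℝ) by norm_num, rpow_natCast]; norm_num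
  have v3 : (3:ℝ)^(3-2*s) = 27 * 3^(-(2*s)) := by
    rw [show (3:ℝ)-2*s = 3 + -(2*s) by ring, rpow_add three_pos,
      show (3:ℝ) = ((3:ℕ):ℝ) by norm_num, rpow_natCast]; norm_num
  rw [w1, w2, w3, w4, v2, v3]
  field_simp
  ring
end

section
/- The double integral -2∫_0^1 ∫_{-1}^0 (1+x)(1-y)/(y-x+1)^{2} dx dy equals 1 + 9 ln 3 - 16 ln 2. -/
open Real

lemma inner_eval (y : ℝ) (hy : 0 ≤ y) :
    (∫ x in (-1:ℝ)..0, (1 + x) * (1 - y) / (y - x + 1) ^ (2:ℕ))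
      = (1 - y) * ((y + 2) / (y + 1) + Real.log (y + 1) - Real.log (y + 2) - 1) := by
  have hpos : ∀ x ∈ Set.uIcc (-1:ℝ) 0, 0 < y - x + 1 := by
    intro x hx
    rw [Set.uIcc_of_le (by norm_num)] at hx
    nlinarith [hx.1, hx.2]
  have key : ∀ x ∈ Set.uIcc (-1:ℝ) 0,
      HasDerivAt (fun x => (1 - y) * ((y + 2) / (y - x + 1) + Real.log (y - x + 1)))
        ((1 + x) * (1 - y) / (y - x + 1) ^ (2:ℕ)) x := by
    intro x hx
    have hu : y - x + 1 ≠ 0 := (hpos x hx).ne'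
    have h1 : HasDerivAt (fun x : ℝ => y - x + 1) (-1) x := by
      simpa using ((hasDerivAt_id x).const_sub y).add_const 1
    have h2 : HasDerivAt (fun x : ℝ => (y + 2) / (y - x + 1))
        ((0 * (y - x + 1) - (y + 2) * (-1)) / (y - x + 1) ^ 2) x :=
      (hasDerivAt_const x (y + 2)).div h1 hu
    have h3 : HasDerivAt (fun x : ℝ => Real.log (y - x + 1)) ((-1) / (y - x + 1)) x :=
      h1.log hu
    have h4 := (h2.add h3).const_mul (1 - y)
    refine h4.congr_deriv ?_
    field_simp
    ring
  have hcont : IntervalIntegrable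
      (fun x => (1 + x) * (1 - y) / (y - x + 1) ^ (2:ℕ)) MeasureTheory.volume (-1) 0 := by
    apply ContinuousOn.intervalIntegrable
    apply ContinuousOn.div
    · fun_prop
    · fun_prop
    · intro x hx
      exact pow_ne_zero _ (hpos x hx).ne'
  rw [intervalIntegral.integral_eq_sub_of_hasDerivAt key hcont]
  have h1 : y - 0 + 1 = y + 1 := by ring
  have h2 : y - (-1) + 1 = y + 2 := by ring
  rw [h1, h2]
  have hy2 : (y + 2) ≠ 0 := by linarith
  field_simp
  ring

lemma outer_eval :
    (∫ y in (0:ℝ)..1, (1 - y) * ((y + 2) / (y + 1) + Real.log (y + 1) - Real.log (y + 2) - 1))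
      = 8 * Real.log 2 - (9/2) * Real.log 3 - 1/2 := by
  have hpos1 : ∀ y ∈ Set.uIcc (0:ℝ) 1, 0 < y + 1 := by
    intro y hy
    rw [Set.uIcc_of_le (by norm_num)] at hy
    linarith [hy.1]
  have hpos2 : ∀ y ∈ Set.uIcc (0:ℝ) 1, 0 < y + 2 := by
    intro y hy
    rw [Set.uIcc_of_le (by norm_num)] at hy
    linarith [hy.1]
  have key : ∀ y ∈ Set.uIcc (0:ℝ) 1,
      HasDerivAt (fun y => (7/2 + y - y^2/2) * Real.log (y + 1)
          - (4 + y - y^2/2) * Real.log (y + 2) - y/2)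
        ((1 - y) * ((y + 2) / (y + 1) + Real.log (y + 1) - Real.log (y + 2) - 1)) y := by
    intro y hy
    have h1 : (y + 1) ≠ 0 := (hpos1 y hy).ne'
    have h2 : (y + 2) ≠ 0 := (hpos2 y hy).ne'
    have hl1 : HasDerivAt (fun y : ℝ => Real.log (y + 1)) (1 / (y + 1)) y := by
      simpa using (((hasDerivAt_id y).add_const 1).log h1)
    have hl2 : HasDerivAt (fun y : ℝ => Real.log (y + 2)) (1 / (y + 2)) y := by
      simpa using (((hasDerivAt_id y).add_const 2).log h2)
    have hp1 : HasDerivAt (fun y : ℝ => 7/2 + y - y^2/2) (1 - y) y := by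
      have h := (((hasDerivAt_const y (7/2:ℝ)).add (hasDerivAt_id y)).sub
          ((hasDerivAt_pow 2 y).div_const 2))
      refine h.congr_deriv ?_
      push_cast
      ring
    have hp2 : HasDerivAt (fun y : ℝ => 4 + y - y^2/2) (1 - y) y := by
      have h := (((hasDerivAt_const y (4:ℝ)).add (hasDerivAt_id y)).sub
          ((hasDerivAt_pow 2 y).div_const 2))
      refine h.congr_deriv ?_
      push_cast
      ring
    have hhalf : HasDerivAt (fun y : ℝ => y/2) (1/2) y := by
      simpa using (hasDerivAt_id y).div_const 2
    have h := ((hp1.mul hl1).sub (hp2.mul hl2)).sub hhalf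
    refine h.congr_deriv ?_
    field_simp
    ring
  have hcont : IntervalIntegrable
      (fun y => (1 - y) * ((y + 2) / (y + 1) + Real.log (y + 1) - Real.log (y + 2) - 1))
      MeasureTheory.volume 0 1 := by
    apply ContinuousOn.intervalIntegrable
    apply ContinuousOn.mul
    · fun_prop
    · apply ContinuousOn.sub
      apply ContinuousOn.sub
      apply ContinuousOn.add
      · exact ContinuousOn.div (by fun_prop) (by fun_prop) (fun y hy => (hpos1 y hy).ne')
      · exact ContinuousOn.log (by fun_prop) (fun y hy => (hpos1 y hy).ne')
      · exact ContinuousOn.log (by fun_prop) (fun y hy => (hpos2 y hy).ne')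
      · fun_prop
  rw [intervalIntegral.integral_eq_sub_of_hasDerivAt key hcont]
  norm_num
  rw [show (3:ℝ) = 1 + 2 by norm_num] at *
  norm_num [Real.log_one]
  ring

theorem stmt_7 :
    -2 * (∫ y in (0:ℝ)..1, ∫ x in (-1:ℝ)..0,
        (1 + x) * (1 - y) / (y - x + 1) ^ (2:ℕ))
      = 1 + 9 * Real.log 3 - 16 * Real.log 2 := by
  have congr1 : (∫ y in (0:ℝ)..1, ∫ x in (-1:ℝ)..0,
        (1 + x) * (1 - y) / (y - x + 1) ^ (2:ℕ))
      = ∫ y in (0:ℝ)..1, (1 - y) * ((y + 2) / (y + 1) + Real.log (y + 1) - Real.log (y + 2) - 1) := by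
    apply intervalIntegral.integral_congr
    intro y hy
    rw [Set.uIcc_of_le (by norm_num)] at hy
    exact inner_eval y hy.1
  rw [congr1, outer_eval]
  ring
end

section
/- For s ∈ (0,1), s ≠ 1/2, the double integral ∫_{-1}^0 ∫_0^1 (x+y)^2/(x-y)^{1+2s} dy dx, where the inner variable y ranges over (0,1) and the outer x over (-1,0) and the denominator is |x-y|^{1+2s} = (y-x)^{1+2s}, equals (2s^2 - 5s + 4 - 2^{2-2s})/(s(1-2s)(1-s)(3-2s)). -/
open Real

private lemma hda_shift (x p y : ℝ) (hu : 0 < y - x) :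
    HasDerivAt (fun y => (y - x) ^ p) (p * (y - x) ^ (p-1)) y := by
  have h : HasDerivAt (fun y : ℝ => y - x) 1 y := (hasDerivAt_id y).sub_const x
  simpa using h.rpow_const (Or.inl hu.ne')

noncomputable def psi (s x : ℝ) : ℝ :=
  (1-x)^(2-2*s)/(2-2*s) + 4*((1-x)^(1-2*s)-(1-x)^(2-2*s))/(1-2*s)
    - 2*((1-x)^(-(2*s)) - 2*(1-x)^(1-2*s) + (1-x)^(2-2*s))/s
    - (-x)^(2-2*s)*(1/(2-2*s)-4/(1-2*s)-2/s)

private lemma inner_eq_s11 (s : ℝ) (hs0 : 0 < s) (hs1 : s < 1) (hs2 : s ≠ 1/2)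
    (x : ℝ) (hx1 : -1 ≤ x) (hx0 : x ≤ 0) :
    (∫ y in (0:ℝ)..1, (x + y)^2 / (y - x) ^ (1 + 2*s)) = psi s x := by
  have hsne : s ≠ 0 := hs0.ne'
  have h12 : (1:ℝ) - 2*s ≠ 0 := by
    intro h; apply hs2; linarith [h]
  have h22 : (0:ℝ) < 2 - 2*s := by linarith
  rcases eq_or_lt_of_le hx0 with rfl | hx0'
  · -- x = 0 case
    have hcong : ∀ y ∈ Set.uIcc (0:ℝ) 1,
        ((0:ℝ) + y)^2 / (y - 0) ^ (1 + 2*s) = y ^ (1 - 2*s) := by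
      rw [Set.uIcc_of_le (by norm_num : (0:ℝ) ≤ 1)]
      intro y hy
      rcases eq_or_lt_of_le hy.1 with rfl | hy0
      · rw [zero_add, sub_zero, Real.zero_rpow h12,
          Real.zero_rpow (by positivity : (1 + 2*s) ≠ 0)]
        norm_num
      · rw [zero_add, sub_zero, show (1 - 2*s) = 2 - (1+2*s) by ring,
          Real.rpow_sub hy0, Real.rpow_two]
    rw [intervalIntegral.integral_congr hcong,
      integral_rpow (Or.inl (by linarith : (-1:ℝ) < 1 - 2*s))]
    rw [show (1 - 2*s + 1) = 2 - 2*s by ring]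
    rw [Real.zero_rpow (by linarith : (2 - 2*s) ≠ 0), Real.one_rpow]
    simp only [psi, sub_zero, neg_zero, Real.one_rpow,
      Real.zero_rpow (by linarith : (2 - 2*s) ≠ 0)]
    field_simp
    ring
  · -- x < 0 case
    have hmx : (0:ℝ) < -x := by linarith
    set G : ℝ → ℝ := fun y =>
      (y-x)^(2-2*s)/(2-2*s) + 4*x*(y-x)^(1-2*s)/(1-2*s) - 2*x^2*(y-x)^(-(2*s))/s
      with hG
    have hderiv : ∀ y ∈ Set.uIcc (0:ℝ) 1,
        HasDerivAt G ((x + y)^2 / (y - x) ^ (1 + 2*s)) y := by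
      rw [Set.uIcc_of_le (by norm_num : (0:ℝ) ≤ 1)]
      intro y hy
      have hu : 0 < y - x := by linarith [hy.1]
      have h1 : HasDerivAt (fun y => (y-x)^(2-2*s)/(2-2*s)) ((y-x)^(1-2*s)) y := by
        convert (hda_shift x (2-2*s) y hu).div_const (2-2*s) using 1
        · rfl
        · rfl
        rw [show (2-2*s)-1 = 1-2*s by ring]
        field_simp
        exact (div_self (by linarith : (1:ℝ) - s ≠ 0)).symm
      have h2 : HasDerivAt (fun y => 4*x*(y-x)^(1-2*s)/(1-2*s))
          (4*x*(y-x)^(-(2*s))) y := by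
        convert ((hda_shift x (1-2*s) y hu).const_mul (4*x)).div_const (1-2*s) using 1
        · rfl
        · rfl
        rw [show (1-2*s)-1 = -(2*s) by ring]
        field_simp
      have h3 : HasDerivAt (fun y => 2*x^2*(y-x)^(-(2*s))/s)
          (-(4*x^2*(y-x)^(-(1+2*s)))) y := by
        convert ((hda_shift x (-(2*s)) y hu).const_mul (2*x^2)).div_const s using 1
        · rfl
        · rfl
        rw [show -(2*s)-1 = -(1+2*s) by ring]
        field_simp
        ring
      have h := (h1.add h2).sub h3
      convert h using 1
      · rfl
      · rfl
      · rfl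
      have hne : (y - x) ^ (1 + 2*s) ≠ 0 := (Real.rpow_pos_of_pos hu _).ne'
      rw [div_eq_iff hne]
      have e1 : (y-x)^(1-2*s) * (y-x)^(1+2*s) = (y-x)^2 := by
        rw [← Real.rpow_add hu, show (1-2*s)+(1+2*s) = (2:ℝ) by ring, Real.rpow_two]
      have e2 : (y-x)^(-(2*s)) * (y-x)^(1+2*s) = y - x := by
        rw [← Real.rpow_add hu, show -(2*s)+(1+2*s) = (1:ℝ) by ring, Real.rpow_one]
      have e3 : (y-x)^(-(1+2*s)) * (y-x)^(1+2*s) = 1 := by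
        rw [← Real.rpow_add hu, show -(1+2*s)+(1+2*s) = (0:ℝ) by ring, Real.rpow_zero]
      linear_combination -e1 - 4*x*e2 - 4*x^2*e3
    have hcont : IntervalIntegrable (fun y => (x + y)^2 / (y - x) ^ (1 + 2*s))
        MeasureTheory.volume 0 1 := by
      apply ContinuousOn.intervalIntegrable
      apply ContinuousOn.div
      · fun_prop
      · apply ContinuousOn.rpow_const
        · fun_prop
        · intro y hy
          rw [Set.uIcc_of_le (by norm_num : (0:ℝ) ≤ 1)] at hy
          exact Or.inl (by nlinarith [hy.1])
      · intro y hy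
        rw [Set.uIcc_of_le (by norm_num : (0:ℝ) ≤ 1)] at hy
        exact (Real.rpow_pos_of_pos (by linarith [hy.1] : (0:ℝ) < y - x) _).ne'
    rw [intervalIntegral.integral_eq_sub_of_hasDerivAt hderiv hcont]
    -- now algebra: G 1 - G 0 = psi s x
    have hax : (0:ℝ) < 1 - x := by linarith
    have J1 : (1-x)^(2-2*s) = (1-x) * (1-x)^(1-2*s) := by
      rw [show (2-2*s) = 1+(1-2*s) by ring, Real.rpow_add hax, Real.rpow_one]
    have J2 : (1-x)^(1-2*s) = (1-x) * (1-x)^(-(2*s)) := by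
      rw [show (1-2*s) = 1+(-(2*s)) by ring, Real.rpow_add hax, Real.rpow_one]
    have J3 : (-x)^(2-2*s) = (-x) * (-x)^(1-2*s) := by
      rw [show (2-2*s) = 1+(1-2*s) by ring, Real.rpow_add hmx, Real.rpow_one]
    have J4 : (-x)^(1-2*s) = (-x) * (-x)^(-(2*s)) := by
      rw [show (1-2*s) = 1+(-(2*s)) by ring, Real.rpow_add hmx, Real.rpow_one]
    simp only [hG, psi, zero_sub]
    rw [J1, J2, J3, J4]
    ring

noncomputable def Phi (s x : ℝ) : ℝ :=
  ((-1/(2-2*s)+4/(1-2*s)+2/s)/(3-2*s)) * (1-x)^(3-2*s)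
  + (-(4/(1-2*s)+4/s)/(2-2*s)) * (1-x)^(2-2*s)
  + (2/(s*(1-2*s))) * (1-x)^(1-2*s)
  - ((-1/(2-2*s)+4/(1-2*s)+2/s)/(3-2*s)) * (-x)^(3-2*s)

set_option maxHeartbeats 2000000 in
theorem stmt_11 (s : ℝ) (hs : s ∈ Set.Ioo (0:ℝ) 1) (hs2 : s ≠ 1/2) :
    (∫ x in (-1:ℝ)..0, ∫ y in (0:ℝ)..1, (x + y)^2 / (y - x) ^ (1 + 2*s))
      = (2*s^2 - 5*s + 4 - (2:ℝ) ^ (2 - 2*s))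
        / (s*(1 - 2*s)*(1 - s)*(3 - 2*s)) := by
  obtain ⟨hs0, hs1⟩ := hs
  have hsne : s ≠ 0 := hs0.ne'
  have h12 : (1:ℝ) - 2*s ≠ 0 := by intro h; apply hs2; linarith [h]
  have h22 : (0:ℝ) < 2 - 2*s := by linarith
  have h32 : (1:ℝ) ≤ 3 - 2*s := by linarith
  have h32' : (0:ℝ) < 3 - 2*s := by linarith
  have hle : (-1:ℝ) ≤ 0 := by norm_num
  have hcong : ∀ x ∈ Set.uIcc (-1:ℝ) 0,
      (∫ y in (0:ℝ)..1, (x + y)^2 / (y - x) ^ (1 + 2*s)) = psi s x := by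
    rw [Set.uIcc_of_le hle]
    intro x hx
    exact inner_eq_s11 s hs0 hs1 hs2 x hx.1 hx.2
  rw [intervalIntegral.integral_congr hcong]
  have hderiv : ∀ x ∈ Set.uIcc (-1:ℝ) 0, HasDerivAt (Phi s) (psi s x) x := by
    rw [Set.uIcc_of_le hle]
    intro x hx
    have hax : (0:ℝ) < 1 - x := by linarith [hx.2]
    have hb : HasDerivAt (fun x : ℝ => 1 - x) (-1) x := (hasDerivAt_id x).const_sub 1
    have hn : HasDerivAt (fun x : ℝ => -x) (-1) x := (hasDerivAt_id x).neg
    have d1 := (hb.rpow_const (Or.inl hax.ne')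
      : HasDerivAt (fun x => (1-x)^(3-2*s)) ((-1)*(3-2*s)*(1-x)^(3-2*s-1)) x)
    have d2 := (hb.rpow_const (Or.inl hax.ne')
      : HasDerivAt (fun x => (1-x)^(2-2*s)) ((-1)*(2-2*s)*(1-x)^(2-2*s-1)) x)
    have d3 := (hb.rpow_const (Or.inl hax.ne')
      : HasDerivAt (fun x => (1-x)^(1-2*s)) ((-1)*(1-2*s)*(1-x)^(1-2*s-1)) x)
    have d4 := (hn.rpow_const (Or.inr h32)
      : HasDerivAt (fun x => (-x)^(3-2*s)) ((-1)*(3-2*s)*(-x)^(3-2*s-1)) x)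
    have h := (((d1.const_mul ((-1/(2-2*s)+4/(1-2*s)+2/s)/(3-2*s))).add
      (d2.const_mul (-(4/(1-2*s)+4/s)/(2-2*s)))).add
      (d3.const_mul (2/(s*(1-2*s))))).sub
      (d4.const_mul ((-1/(2-2*s)+4/(1-2*s)+2/s)/(3-2*s)))
    convert h using 1
    · rfl
    · rfl
    · rfl
    rw [show (3-2*s)-1 = 2-2*s by ring, show (2-2*s)-1 = 1-2*s by ring,
      show (1-2*s)-1 = -(2*s) by ring]
    unfold psi
    field_simp
    ring
  have cont1 : ∀ p : ℝ, ContinuousOn (fun x : ℝ => (1-x)^p) (Set.uIcc (-1:ℝ) 0) := by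
    intro p
    apply ContinuousOn.rpow_const (by fun_prop)
    intro x hx
    rw [Set.uIcc_of_le hle] at hx
    exact Or.inl (by nlinarith [hx.2])
  have cont2 : ContinuousOn (fun x : ℝ => (-x)^(2-2*s)) (Set.uIcc (-1:ℝ) 0) :=
    ContinuousOn.rpow_const (by fun_prop) (fun x hx => Or.inr h22.le)
  have hint : IntervalIntegrable (psi s) MeasureTheory.volume (-1) 0 := by
    apply ContinuousOn.intervalIntegrable
    unfold psi
    exact ((((cont1 (2-2*s)).div_const _).add
      ((continuousOn_const.mul ((cont1 (1-2*s)).sub (cont1 (2-2*s)))).div_const _)).sub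
      ((continuousOn_const.mul (((cont1 (-(2*s))).sub
        (continuousOn_const.mul (cont1 (1-2*s)))).add (cont1 (2-2*s)))).div_const _)).sub
      (cont2.mul continuousOn_const)
  rw [intervalIntegral.integral_eq_sub_of_hasDerivAt hderiv hint]
  unfold Phi
  rw [show (1:ℝ) - 0 = 1 by norm_num, show (1:ℝ) - (-1) = 2 by norm_num, neg_zero,
    show -(-1:ℝ) = 1 by norm_num]
  rw [Real.zero_rpow (by linarith : (3-2*s) ≠ 0)]
  simp only [Real.one_rpow]
  have K2 : (2:ℝ)^(2-2*s) = 2*2^(1-2*s) := by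
    rw [show (2-2*s) = 1+(1-2*s) by ring, Real.rpow_add (by norm_num : (0:ℝ) < 2),
      Real.rpow_one]
  have K1 : (2:ℝ)^(3-2*s) = 2*(2*2^(1-2*s)) := by
    rw [show (3-2*s) = 1+(2-2*s) by ring, Real.rpow_add (by norm_num : (0:ℝ) < 2),
      Real.rpow_one, K2]
  rw [K1, K2]
  have h1s : (1:ℝ) - s ≠ 0 := by linarith
  have hD : s*(1 - 2*s)*(1 - s)*(3 - 2*s) ≠ 0 :=
    mul_ne_zero (mul_ne_zero (mul_ne_zero hsne h12) h1s) (by linarith)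
  rw [eq_div_iff hD]
  generalize (2:ℝ)^(1-2*s) = t
  field_simp
  ring
end
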